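/- Let (μ_n) be the generalized DR model μ_{n+1} = [(1−α)μ_n + α μ_n * μ_n^q] ∘ T₁^{−1} with 0 ≤ α ≤ 1 and offspring distribution q with first and second moments m₁, m₂. Then for every n ≥ 0, ∫ z² dμ_{n+1}(z) ≤ (1 + 2α m₁ + α m₂) ∫ z² dμ_n(z). -/

import Mathlib

open MeasureTheory ProbabilityTheory Filter
open scoped ENNReal NNReal

noncomputable section

/-- Truncated Euclidean cost `ρ(x,y) = min(1, |x-y|)` on `ℝ≥0`. -/
def rho (x y : ℝ≥0) : ℝ := min 1 |(x : ℝ) - (y : ℝ)|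

/-- `π` is a coupling of `μ` and `ν`. -/
def IsCoupling (π : Measure (ℝ≥0 × ℝ≥0)) (μ ν : Measure ℝ≥0) : Prop :=
  π.map Prod.fst = μ ∧ π.map Prod.snd = ν

/-- Wasserstein distance for the truncated cost. -/
def W (μ ν : Measure ℝ≥0) : ℝ :=
  sInf { r : ℝ | ∃ π : Measure (ℝ≥0 × ℝ≥0),
    IsProbabilityMeasure π ∧ IsCoupling π μ ν ∧ r = ∫ p, rho p.1 p.2 ∂π }

/-- Convolution of two measures on `ℝ≥0`. -/
def conv (μ ν : Measure ℝ≥0) : Measure ℝ≥0 :=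
  (μ.prod ν).map (fun p => p.1 + p.2)

/-- `k`-fold convolution power (`convPow μ 0 = δ₀`). -/
def convPow (μ : Measure ℝ≥0) : ℕ → Measure ℝ≥0
  | 0 => Measure.dirac 0
  | n + 1 => conv (convPow μ n) μ

/-- The `q`-mixture `μ^q = ∑_{k≥1} q_k μ^{*k}` (`q k` = weight of `k`). -/
def qMix (q : ℕ → ℝ≥0) (μ : Measure ℝ≥0) : Measure ℝ≥0 :=
  Measure.sum (fun k => ((q (k + 1) : ℝ≥0∞)) • convPow μ (k + 1))

/-- Total variation norm of the difference of two finite measures. -/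
def tvDist (μ ν : Measure ℝ≥0) : ℝ :=
  sSup { r : ℝ | ∃ s : Set ℝ≥0, MeasurableSet s ∧
    r = |(μ s).toReal - (ν s).toReal| + |(μ sᶜ).toReal - (ν sᶜ).toReal| }

namespace DRaux

def Mm (μ : Measure ℝ≥0) : ℝ≥0∞ := ∫⁻ z, (z : ℝ≥0∞) ∂μ
def Ss (μ : Measure ℝ≥0) : ℝ≥0∞ := ∫⁻ z, (z : ℝ≥0∞) ^ 2 ∂μ

theorem M_sq_le_S (μ : Measure ℝ≥0) [IsProbabilityMeasure μ] : Mm μ ^ 2 ≤ Ss μ := by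
  have h := ENNReal.lintegral_mul_le_Lp_mul_Lq μ (p := 2) (q := 2)
    Real.HolderConjugate.two_two (f := fun z : ℝ≥0 => (z : ℝ≥0∞)) (g := fun _ => 1)
    measurable_coe_nnreal_ennreal.aemeasurable aemeasurable_const
  simp only [Pi.mul_apply, mul_one, ENNReal.one_rpow, lintegral_const, measure_univ,
    ENNReal.one_rpow, one_mul] at h
  have h2 : ∫⁻ z : ℝ≥0, (z : ℝ≥0∞) ^ (2:ℝ) ∂μ = Ss μ := by
    rw [Ss]; congr 1; funext z; rw [← ENNReal.rpow_natCast (z : ℝ≥0∞) 2]; norm_num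
  rw [h2] at h
  calc Mm μ ^ 2 ≤ (Ss μ ^ ((1:ℝ)/2)) ^ 2 := pow_le_pow_left' h 2
    _ = Ss μ := by
        rw [← ENNReal.rpow_natCast (Ss μ ^ ((1:ℝ)/2)) 2, ← ENNReal.rpow_mul]
        norm_num

theorem lintegral_conv {μ ν : Measure ℝ≥0} [SFinite μ] [SFinite ν] {f : ℝ≥0 → ℝ≥0∞}
    (hf : Measurable f) :
    ∫⁻ z, f z ∂(conv μ ν) = ∫⁻ x, ∫⁻ y, f (x + y) ∂ν ∂μ := by
  rw [conv, lintegral_map hf (by fun_prop : Measurable fun p : ℝ≥0 × ℝ≥0 => p.1 + p.2)]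
  exact lintegral_prod _ ((hf.comp (measurable_fst.add measurable_snd)).aemeasurable)

instance conv_prob (μ ν : Measure ℝ≥0) [IsProbabilityMeasure μ] [IsProbabilityMeasure ν] :
    IsProbabilityMeasure (conv μ ν) :=
  Measure.isProbabilityMeasure_map (measurable_fst.add measurable_snd).aemeasurable

instance convPow_prob (μ : Measure ℝ≥0) [IsProbabilityMeasure μ] (k : ℕ) :
    IsProbabilityMeasure (convPow μ k) := by
  induction k with
  | zero => rw [convPow]; infer_instance
  | succ k ih => rw [convPow]; infer_instance

instance qMix_sfinite (q : ℕ → ℝ≥0) (μ : Measure ℝ≥0) [IsProbabilityMeasure μ] :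
    SFinite (qMix q μ) := by
  unfold qMix
  infer_instance

theorem M_conv (μ ν : Measure ℝ≥0) [IsProbabilityMeasure μ] [IsProbabilityMeasure ν] :
    Mm (conv μ ν) = Mm μ + Mm ν := by
  rw [Mm, lintegral_conv measurable_coe_nnreal_ennreal]
  have h1 : ∀ x : ℝ≥0, ∫⁻ y : ℝ≥0, ((x + y : ℝ≥0) : ℝ≥0∞) ∂ν = (x : ℝ≥0∞) + Mm ν := by
    intro x
    simp only [ENNReal.coe_add]
    rw [lintegral_add_left measurable_const, lintegral_const, measure_univ, mul_one, Mm]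
  simp only [h1]
  rw [lintegral_add_right _ measurable_const, lintegral_const, measure_univ, mul_one]; rfl

theorem S_conv (μ ν : Measure ℝ≥0) [IsProbabilityMeasure μ] [IsProbabilityMeasure ν] :
    Ss (conv μ ν) = Ss μ + 2 * Mm μ * Mm ν + Ss ν := by
  rw [Ss, lintegral_conv (measurable_coe_nnreal_ennreal.pow_const 2)]
  have h1 : ∀ x : ℝ≥0, ∫⁻ y : ℝ≥0, ((x + y : ℝ≥0) : ℝ≥0∞) ^ 2 ∂ν
      = (x : ℝ≥0∞) ^ 2 + 2 * Mm ν * (x : ℝ≥0∞) + Ss ν := by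
    intro x
    have he : ∀ y : ℝ≥0, ((x + y : ℝ≥0) : ℝ≥0∞) ^ 2
        = ((x : ℝ≥0∞) ^ 2 + 2 * (x : ℝ≥0∞) * (y : ℝ≥0∞)) + (y : ℝ≥0∞) ^ 2 := by
      intro y; push_cast; ring
    simp only [he]
    rw [lintegral_add_right _ (measurable_coe_nnreal_ennreal.pow_const 2),
      lintegral_add_left measurable_const,
      lintegral_const_mul _ measurable_coe_nnreal_ennreal, lintegral_const,
      measure_univ, mul_one, ← Mm, ← Ss]
    ring
  simp only [h1]
  rw [lintegral_add_right _ measurable_const,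
    lintegral_add_left (measurable_coe_nnreal_ennreal.pow_const 2),
    lintegral_const_mul _ measurable_coe_nnreal_ennreal, lintegral_const,
    measure_univ, mul_one, ← Mm, ← Ss]
  ring

theorem M_convPow (μ : Measure ℝ≥0) [IsProbabilityMeasure μ] (k : ℕ) :
    Mm (convPow μ k) = (k : ℝ≥0∞) * Mm μ := by
  induction k with
  | zero => simp [convPow, Mm, lintegral_dirac]
  | succ k ih =>
      rw [convPow, M_conv, ih]
      push_cast
      ring

theorem S_convPow (μ : Measure ℝ≥0) [IsProbabilityMeasure μ] (k : ℕ) :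
    Ss (convPow μ k) ≤ (k : ℝ≥0∞) ^ 2 * Ss μ := by
  induction k with
  | zero => simp [convPow, Ss, lintegral_dirac]
  | succ k ih =>
      rw [convPow, S_conv, M_convPow]
      have h1 : 2 * ((k : ℝ≥0∞) * Mm μ) * Mm μ ≤ 2 * (k : ℝ≥0∞) * Ss μ := by
        calc 2 * ((k : ℝ≥0∞) * Mm μ) * Mm μ = 2 * (k : ℝ≥0∞) * Mm μ ^ 2 := by ring
          _ ≤ 2 * (k : ℝ≥0∞) * Ss μ := mul_le_mul_right (M_sq_le_S μ) _
      calc Ss (convPow μ k) + 2 * ((k : ℝ≥0∞) * Mm μ) * Mm μ + Ss μ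
          ≤ (k : ℝ≥0∞) ^ 2 * Ss μ + 2 * (k : ℝ≥0∞) * Ss μ + Ss μ :=
            add_le_add (add_le_add ih h1) le_rfl
        _ = ((k : ℝ≥0∞) + 1) ^ 2 * Ss μ := by ring
        _ = ((k + 1 : ℕ) : ℝ≥0∞) ^ 2 * Ss μ := by push_cast; ring

theorem S_conv_convPow_le (μ : Measure ℝ≥0) [IsProbabilityMeasure μ] (k : ℕ) :
    Ss (conv μ (convPow μ (k + 1))) ≤ ((k : ℝ≥0∞) + 2) ^ 2 * Ss μ := by
  rw [S_conv, M_convPow]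
  have h1 : 2 * Mm μ * (((k + 1 : ℕ) : ℝ≥0∞) * Mm μ) ≤ 2 * ((k : ℝ≥0∞) + 1) * Ss μ := by
    calc 2 * Mm μ * (((k + 1 : ℕ) : ℝ≥0∞) * Mm μ) = 2 * ((k : ℝ≥0∞) + 1) * Mm μ ^ 2 := by
          push_cast; ring
      _ ≤ 2 * ((k : ℝ≥0∞) + 1) * Ss μ := mul_le_mul_right (M_sq_le_S μ) _
  calc Ss μ + 2 * Mm μ * (((k + 1 : ℕ) : ℝ≥0∞) * Mm μ) + Ss (convPow μ (k + 1))
      ≤ Ss μ + 2 * ((k : ℝ≥0∞) + 1) * Ss μ + ((k + 1 : ℕ) : ℝ≥0∞) ^ 2 * Ss μ :=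
        add_le_add (add_le_add le_rfl h1) (S_convPow μ (k + 1))
    _ = ((k : ℝ≥0∞) + 2) ^ 2 * Ss μ := by push_cast; ring

theorem S_conv_qMix (q : ℕ → ℝ≥0) (μ : Measure ℝ≥0) [IsProbabilityMeasure μ] :
    Ss (conv μ (qMix q μ)) = ∑' k, (q (k + 1) : ℝ≥0∞) * Ss (conv μ (convPow μ (k + 1))) := by
  have hm : Measurable fun z : ℝ≥0 => (z : ℝ≥0∞) ^ 2 := measurable_coe_nnreal_ennreal.pow_const 2
  have hmadd : Measurable fun p : ℝ≥0 × ℝ≥0 => ((p.1 + p.2 : ℝ≥0) : ℝ≥0∞) ^ 2 :=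
    hm.comp (measurable_fst.add measurable_snd)
  rw [Ss, lintegral_conv hm]
  have h1 : ∀ x : ℝ≥0, ∫⁻ y, ((x + y : ℝ≥0) : ℝ≥0∞) ^ 2 ∂(qMix q μ)
      = ∑' k, (q (k + 1) : ℝ≥0∞) * ∫⁻ y, ((x + y : ℝ≥0) : ℝ≥0∞) ^ 2 ∂(convPow μ (k + 1)) := by
    intro x
    rw [qMix, lintegral_sum_measure]
    congr 1; funext k
    rw [lintegral_smul_measure, smul_eq_mul]
  simp only [h1]
  rw [lintegral_tsum]
  · congr 1; funext k
    rw [lintegral_const_mul _ (Measurable.lintegral_prod_right' (ν := convPow μ (k+1)) hmadd),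
      Ss, lintegral_conv hm]
  · intro k
    exact (((Measurable.lintegral_prod_right' (ν := convPow μ (k+1)) hmadd)).const_mul _).aemeasurable

end DRaux

open DRaux in
/-- Second-moment growth of the generalized DR model:
`∫ z² dμ_{n+1} ≤ (1 + 2α m₁ + α m₂) ∫ z² dμ_n`. -/
theorem secondMoment_DR_step (α : ℝ≥0) (hα : α ≤ 1)
    (q : ℕ → ℝ≥0) (hq0 : q 0 = 0) (hq1 : ∑' k, q k = 1)
    (m₁ m₂ : ℝ) (hm₁ : HasSum (fun k : ℕ => (k : ℝ) * (q k : ℝ)) m₁)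
    (hm₂ : HasSum (fun k : ℕ => ((k : ℝ)) ^ 2 * (q k : ℝ)) m₂)
    (μ : ℕ → Measure ℝ≥0) (hp : ∀ n, IsProbabilityMeasure (μ n))
    (hint : ∀ n, Integrable (fun z : ℝ≥0 => ((z : ℝ)) ^ 2) (μ n))
    (hrec : ∀ n, μ (n + 1) =
      (((1 - α : ℝ≥0) : ℝ≥0∞) • μ n
        + ((α : ℝ≥0∞)) • conv (μ n) (qMix q (μ n))).map (fun x => x - (1 : ℝ≥0))) :
    ∀ n, ∫ z, ((z : ℝ)) ^ 2 ∂(μ (n + 1))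
      ≤ (1 + 2 * (α : ℝ) * m₁ + (α : ℝ) * m₂) * ∫ z, ((z : ℝ)) ^ 2 ∂(μ n) := by
  -- nonnegativity of the moments
  have hm1n : 0 ≤ m₁ := by
    rw [← hm₁.tsum_eq]; exact tsum_nonneg fun k => by positivity
  have hm2n : 0 ≤ m₂ := by
    rw [← hm₂.tsum_eq]; exact tsum_nonneg fun k => by positivity
  set C : ℝ := 1 + 2 * (α : ℝ) * m₁ + (α : ℝ) * m₂ with hCdef
  have hC0 : 0 ≤ C := by
    have hα0 : (0:ℝ) ≤ (α : ℝ) := α.coe_nonneg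
    nlinarith [mul_nonneg hα0 hm1n, mul_nonneg hα0 hm2n]
  -- real-side summability
  have hqsum : Summable fun j : ℕ => (q j : ℝ) := by
    refine Summable.of_nonneg_of_le (fun j => (q j).coe_nonneg) (fun j => ?_) hm₁.summable
    match j with
    | 0 => simp [hq0]
    | (j+1) =>
        have : (1:ℝ) ≤ ((j+1 : ℕ) : ℝ) := by exact_mod_cast Nat.one_le_iff_ne_zero.2 (Nat.succ_ne_zero j)
        exact le_mul_of_one_le_left (q (j+1)).coe_nonneg this
  have hq1' : HasSum (fun j : ℕ => (q j : ℝ)) 1 := by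
    have h := hqsum.hasSum
    rwa [← NNReal.coe_tsum, hq1, NNReal.coe_one] at h
  have hg : HasSum (fun j : ℕ => (q j : ℝ) * ((j : ℝ) + 1) ^ 2) (m₂ + (2 * m₁ + 1)) := by
    have h := hm₂.add ((hm₁.mul_left 2).add hq1')
    have he : (fun j : ℕ => (q j : ℝ) * ((j : ℝ) + 1) ^ 2)
        = fun j : ℕ => (j : ℝ) ^ 2 * (q j : ℝ) + (2 * ((j : ℝ) * (q j : ℝ)) + (q j : ℝ)) := by
      funext j; ring
    rw [he]; exact h
  have hshift : HasSum (fun k : ℕ => (q (k + 1) : ℝ) * (((k + 1 : ℕ) : ℝ) + 1) ^ 2)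
      (m₂ + (2 * m₁ + 1)) := by
    refine (hasSum_nat_add_iff (f := fun j : ℕ => (q j : ℝ) * ((j : ℝ) + 1) ^ 2) 1).2 ?_
    simpa [hq0] using hg
  -- the ENNReal constant T
  have hT : (∑' k : ℕ, (q (k + 1) : ℝ≥0∞) * ((k : ℝ≥0∞) + 2) ^ 2)
      = ENNReal.ofReal (m₂ + (2 * m₁ + 1)) := by
    rw [← hshift.tsum_eq,
      ENNReal.ofReal_tsum_of_nonneg (fun k => by positivity) hshift.summable]
    congr 1; funext k
    rw [ENNReal.ofReal_mul (q (k+1)).coe_nonneg, ENNReal.ofReal_coe_nnreal,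
      ENNReal.ofReal_pow (by positivity)]
    congr 2
    rw [show (((k + 1 : ℕ) : ℝ) + 1) = ((k : ℝ) + 2) by push_cast; ring,
      ENNReal.ofReal_add (by positivity) (by norm_num), ENNReal.ofReal_natCast]
    norm_num
  intro n
  haveI := hp n
  -- key ENNReal inequality
  have hm : Measurable fun z : ℝ≥0 => (z : ℝ≥0∞) ^ 2 := measurable_coe_nnreal_ennreal.pow_const 2
  have hsub : Measurable fun x : ℝ≥0 => x - 1 := (continuous_id.sub continuous_const).measurable
  have stepA : Ss (μ (n + 1))
      ≤ ((1 - α : ℝ≥0) : ℝ≥0∞) * Ss (μ n) + (α : ℝ≥0∞) * Ss (conv (μ n) (qMix q (μ n))) := by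
    rw [Ss, hrec n, lintegral_map hm hsub]
    calc ∫⁻ x, ((x - 1 : ℝ≥0) : ℝ≥0∞) ^ 2
          ∂(((1 - α : ℝ≥0) : ℝ≥0∞) • μ n + (α : ℝ≥0∞) • conv (μ n) (qMix q (μ n)))
        ≤ ∫⁻ x, (x : ℝ≥0∞) ^ 2
          ∂(((1 - α : ℝ≥0) : ℝ≥0∞) • μ n + (α : ℝ≥0∞) • conv (μ n) (qMix q (μ n))) :=
          lintegral_mono fun x => pow_le_pow_left' (ENNReal.coe_le_coe.2 tsub_le_self) 2
      _ = ((1 - α : ℝ≥0) : ℝ≥0∞) * Ss (μ n) + (α : ℝ≥0∞) * Ss (conv (μ n) (qMix q (μ n))) := by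
          rw [lintegral_add_measure, lintegral_smul_measure, lintegral_smul_measure]; rfl
  have stepB : Ss (conv (μ n) (qMix q (μ n)))
      ≤ (∑' k : ℕ, (q (k + 1) : ℝ≥0∞) * ((k : ℝ≥0∞) + 2) ^ 2) * Ss (μ n) := by
    rw [S_conv_qMix]
    calc (∑' k : ℕ, (q (k + 1) : ℝ≥0∞) * Ss (conv (μ n) (convPow (μ n) (k + 1))))
        ≤ ∑' k : ℕ, (q (k + 1) : ℝ≥0∞) * (((k : ℝ≥0∞) + 2) ^ 2 * Ss (μ n)) :=
          ENNReal.tsum_le_tsum fun k => mul_le_mul_right (S_conv_convPow_le (μ n) k) _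
      _ = (∑' k : ℕ, (q (k + 1) : ℝ≥0∞) * ((k : ℝ≥0∞) + 2) ^ 2) * Ss (μ n) := by
          simp_rw [← mul_assoc]
          exact ENNReal.tsum_mul_right
  have hconst : ((1 - α : ℝ≥0) : ℝ≥0∞) + (α : ℝ≥0∞) * ENNReal.ofReal (m₂ + (2 * m₁ + 1))
      = ENNReal.ofReal C := by
    rw [show ((1 - α : ℝ≥0) : ℝ≥0∞) = ENNReal.ofReal ((1 - α : ℝ≥0) : ℝ) from
        (ENNReal.ofReal_coe_nnreal).symm,
      show ((α : ℝ≥0) : ℝ≥0∞) = ENNReal.ofReal ((α : ℝ≥0) : ℝ) from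
        (ENNReal.ofReal_coe_nnreal).symm,
      ← ENNReal.ofReal_mul α.coe_nonneg,
      ← ENNReal.ofReal_add ((1 - α : ℝ≥0)).coe_nonneg
        (mul_nonneg α.coe_nonneg (by nlinarith))]
    congr 1
    rw [NNReal.coe_sub hα, hCdef]
    push_cast
    ring
  have key : Ss (μ (n + 1)) ≤ ENNReal.ofReal C * Ss (μ n) := by
    calc Ss (μ (n + 1))
        ≤ ((1 - α : ℝ≥0) : ℝ≥0∞) * Ss (μ n) + (α : ℝ≥0∞) * Ss (conv (μ n) (qMix q (μ n))) :=
          stepA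
      _ ≤ ((1 - α : ℝ≥0) : ℝ≥0∞) * Ss (μ n)
          + (α : ℝ≥0∞) * ((∑' k : ℕ, (q (k + 1) : ℝ≥0∞) * ((k : ℝ≥0∞) + 2) ^ 2) * Ss (μ n)) :=
          add_le_add le_rfl (mul_le_mul_right stepB _)
      _ = (((1 - α : ℝ≥0) : ℝ≥0∞) + (α : ℝ≥0∞) * ENNReal.ofReal (m₂ + (2 * m₁ + 1)))
          * Ss (μ n) := by rw [hT]; ring
      _ = ENNReal.ofReal C * Ss (μ n) := by rw [hconst]
  -- conversion to real integrals
  have hSrepr : ∀ ν : Measure ℝ≥0, ∫ z, ((z : ℝ)) ^ 2 ∂ν = (Ss ν).toReal := by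
    intro ν
    rw [integral_eq_lintegral_of_nonneg_ae (ae_of_all _ fun z => sq_nonneg _)
      (measurable_coe_nnreal_real.pow_const 2).aestronglyMeasurable]
    congr 1
    refine lintegral_congr fun z => ?_
    rw [ENNReal.ofReal_pow z.coe_nonneg, ENNReal.ofReal_coe_nnreal]
  have hfin : Ss (μ n) ≠ ⊤ := by
    have h : ∫⁻ z, (‖((z : ℝ)) ^ 2‖₊ : ℝ≥0∞) ∂(μ n) < ⊤ := (hint n).2
    have he : Ss (μ n) = ∫⁻ z, (‖((z : ℝ)) ^ 2‖₊ : ℝ≥0∞) ∂(μ n) := by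
      rw [Ss]
      refine lintegral_congr fun z => ?_
      rw [← enorm_eq_nnnorm, Real.enorm_eq_ofReal (sq_nonneg _), ENNReal.ofReal_pow z.coe_nonneg,
        ENNReal.ofReal_coe_nnreal]
    rw [he]
    exact h.ne
  have hRfin : ENNReal.ofReal C * Ss (μ n) ≠ ⊤ :=
    ENNReal.mul_ne_top ENNReal.ofReal_ne_top hfin
  have hfinal := ENNReal.toReal_mono hRfin key
  rw [ENNReal.toReal_mul, ENNReal.toReal_ofReal hC0] at hfinal
  rw [hSrepr, hSrepr]
  exact hfinal
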